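/- Under type II relations (αᵢγᵢ = γᵢαᵢ, αᵢβᵢ = βᵢγᵢ, α₁α₂ = qα₂α₁, α₁γ₂ = q⁻¹γ₂α₁, α₂γ₁ = qγ₁α₂, γ₁γ₂ = qγ₂γ₁, α₁β₂ = qβ₂γ₁, β₁γ₂ = qα₂β₁), the matrices satisfy (U₁^n U₂^m)(U₁^s U₂^t) = q^{nt - ms} (U₁^s U₂^t)(U₁^n U₂^m) for all integers n, m, s, t. -/

import Mathlib

private lemma key_one {G : Type*} [Group G] (Q v₁ v₂ : G) (hQ : ∀ x, Commute Q x)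
    (h : v₁ * v₂ = Q * (v₂ * v₁)) :
    ∀ n : ℤ, v₁ ^ n * v₂ = Q ^ n * (v₂ * v₁ ^ n) := by
  have h' : v₁⁻¹ * v₂ = Q⁻¹ * (v₂ * v₁⁻¹) := by
    have : v₂ * v₁⁻¹ = Q * (v₁⁻¹ * v₂) := by
      calc v₂ * v₁⁻¹ = v₁⁻¹ * (v₁ * v₂) * v₁⁻¹ := by group
        _ = v₁⁻¹ * (Q * (v₂ * v₁)) * v₁⁻¹ := by rw [h]
        _ = Q * (v₁⁻¹ * v₂) := by
            rw [← mul_assoc v₁⁻¹ Q, ← (hQ v₁⁻¹).eq]; group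
    rw [this]; group
  intro n
  induction n using Int.induction_on with
  | zero => simp
  | succ i ih =>
    calc v₁ ^ (i + 1 : ℤ) * v₂ = v₁ ^ (i : ℤ) * (v₁ * v₂) := by
          rw [zpow_add_one, mul_assoc]
      _ = v₁ ^ (i : ℤ) * (Q * (v₂ * v₁)) := by rw [h]
      _ = Q * ((v₁ ^ (i : ℤ) * v₂) * v₁) := by
          rw [← mul_assoc (v₁ ^ (i : ℤ)) Q, ← (hQ (v₁ ^ (i : ℤ))).eq]; group
      _ = Q * ((Q ^ (i : ℤ) * (v₂ * v₁ ^ (i : ℤ))) * v₁) := by rw [ih]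
      _ = Q ^ (i + 1 : ℤ) * (v₂ * v₁ ^ (i + 1 : ℤ)) := by
          rw [zpow_add_one, zpow_add_one]; group
  | pred i ih =>
    calc v₁ ^ (-i - 1 : ℤ) * v₂ = v₁ ^ (-i : ℤ) * (v₁⁻¹ * v₂) := by
          rw [zpow_sub_one, mul_assoc]
      _ = v₁ ^ (-i : ℤ) * (Q⁻¹ * (v₂ * v₁⁻¹)) := by rw [h']
      _ = Q⁻¹ * ((v₁ ^ (-i : ℤ) * v₂) * v₁⁻¹) := by
          rw [← mul_assoc (v₁ ^ (-i : ℤ)) Q⁻¹, ← ((hQ (v₁ ^ (-i : ℤ))).inv_left).eq]; group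
      _ = Q⁻¹ * ((Q ^ (-i : ℤ) * (v₂ * v₁ ^ (-i : ℤ))) * v₁⁻¹) := by rw [ih]
      _ = Q ^ (-i - 1 : ℤ) * (v₂ * v₁ ^ (-i - 1 : ℤ)) := by
          rw [zpow_sub_one, zpow_sub_one]; group

private lemma key_two {G : Type*} [Group G] (Q v₁ v₂ : G) (hQ : ∀ x, Commute Q x)
    (h : v₁ * v₂ = Q * (v₂ * v₁)) :
    ∀ n m : ℤ, v₁ ^ n * v₂ ^ m = Q ^ (n * m) * (v₂ ^ m * v₁ ^ n) := by
  intro n m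
  have h1 : v₁ ^ n * v₂ * (v₁ ^ n)⁻¹ = Q ^ n * v₂ := by
    rw [key_one Q v₁ v₂ hQ h n]; group
  have h2 : v₁ ^ n * v₂ ^ m * (v₁ ^ n)⁻¹ = (v₁ ^ n * v₂ * (v₁ ^ n)⁻¹) ^ m := by
    rw [conj_zpow]
  rw [h1] at h2
  have h3 : (Q ^ n * v₂) ^ m = Q ^ (n * m) * v₂ ^ m := by
    rw [((hQ v₂).zpow_left n).mul_zpow, ← zpow_mul]
  rw [h3] at h2
  calc v₁ ^ n * v₂ ^ m = (v₁ ^ n * v₂ ^ m * (v₁ ^ n)⁻¹) * v₁ ^ n := by group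
    _ = Q ^ (n * m) * (v₂ ^ m * v₁ ^ n) := by rw [h2]; group

/-- Under type II relations, `(U₁ⁿU₂ᵐ)(U₁ˢU₂ᵗ) = q^{nt-ms} (U₁ˢU₂ᵗ)(U₁ⁿU₂ᵐ)`. -/
theorem typeII_monomials_q_commute {k A : Type*} [Field k] [CharZero k] [Ring A] [Algebra k A]
    (q : k) (hq0 : q ≠ 0)
    (α₁ γ₁ α₂ γ₂ : Aˣ) (β₁ β₂ : A)
    (hI1 : (α₁ : A) * (γ₁ : A) = (γ₁ : A) * (α₁ : A))
    (hI2 : (α₂ : A) * (γ₂ : A) = (γ₂ : A) * (α₂ : A))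
    (hB1 : (α₁ : A) * β₁ = β₁ * (γ₁ : A)) (hB2 : (α₂ : A) * β₂ = β₂ * (γ₂ : A))
    (hAA : (α₁ : A) * (α₂ : A) = q • ((α₂ : A) * (α₁ : A)))
    (hAC : (α₁ : A) * (γ₂ : A) = q⁻¹ • ((γ₂ : A) * (α₁ : A)))
    (hCA : (α₂ : A) * (γ₁ : A) = q • ((γ₁ : A) * (α₂ : A)))
    (hCC : (γ₁ : A) * (γ₂ : A) = q • ((γ₂ : A) * (γ₁ : A)))
    (hAB : (α₁ : A) * β₂ = q • (β₂ * (γ₁ : A)))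
    (hBC : β₁ * (γ₂ : A) = q • ((α₂ : A) * β₁))
    (V₁ V₂ : (Matrix (Fin 2) (Fin 2) A)ˣ)
    (hV₁ : V₁.val = !![(α₁ : A), β₁; 0, (γ₁ : A)])
    (hV₂ : V₂.val = !![(α₂ : A), β₂; 0, (γ₂ : A)]) :
    ∀ n m s t : ℤ,
      (V₁ ^ n * V₂ ^ m).val *
        (V₁ ^ s * V₂ ^ t).val
      = q ^ (n * t - m * s) •
        ((V₁ ^ s * V₂ ^ t).val *
          (V₁ ^ n * V₂ ^ m).val) := by
  set Q : (Matrix (Fin 2) (Fin 2) A)ˣ :=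
    Units.map (algebraMap k (Matrix (Fin 2) (Fin 2) A) : k →* Matrix (Fin 2) (Fin 2) A)
      (Units.mk0 q hq0) with hQdef
  have hQval : Q.val = algebraMap k (Matrix (Fin 2) (Fin 2) A) q := by rw [hQdef]; rfl
  have hQzpow : ∀ e : ℤ, (Q ^ e).val = algebraMap k (Matrix (Fin 2) (Fin 2) A) (q ^ e) := by
    intro e
    rw [← map_zpow]
    show (algebraMap k (Matrix (Fin 2) (Fin 2) A) : k →* Matrix (Fin 2) (Fin 2) A) ((Units.mk0 q hq0 ^ e : kˣ) : k) = _
    rw [Units.val_zpow_eq_zpow_val]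
    rfl
  have hQ : ∀ x : (Matrix (Fin 2) (Fin 2) A)ˣ, Commute Q x := by
    intro x
    apply Units.ext
    show Q.val * x.val = x.val * Q.val
    rw [hQval, ← Algebra.commutes q x.val]
  have hcomm : V₁ * V₂ = Q * (V₂ * V₁) := by
    rw [Algebra.smul_def] at hAA hCC hAB hBC
    apply Units.ext
    show V₁.val * V₂.val = Q.val * (V₂.val * V₁.val)
    rw [hQval, hV₁, hV₂]
    ext i j
    fin_cases i <;> fin_cases j <;>
      simp [Matrix.mul_apply, Fin.sum_univ_succ, Matrix.algebraMap_matrix_apply,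
        hAA, hCC, hAB, hBC, mul_add, add_comm]
  have key := key_two Q V₁ V₂ hQ hcomm
  intro n m s t
  have hunits : (V₁ ^ n * V₂ ^ m) * (V₁ ^ s * V₂ ^ t)
      = Q ^ (n * t - m * s) * ((V₁ ^ s * V₂ ^ t) * (V₁ ^ n * V₂ ^ m)) := by
    have hms : V₂ ^ m * V₁ ^ s = Q ^ (-(s * m)) * (V₁ ^ s * V₂ ^ m) := by
      rw [key s m, ← mul_assoc, ← zpow_add, neg_add_cancel, zpow_zero, one_mul]
    have hnt : V₂ ^ t * V₁ ^ n = Q ^ (-(n * t)) * (V₁ ^ n * V₂ ^ t) := by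
      rw [key n t, ← mul_assoc, ← zpow_add, neg_add_cancel, zpow_zero, one_mul]
    have hc : ∀ (c : ℤ) (x : (Matrix (Fin 2) (Fin 2) A)ˣ), x * Q ^ c = Q ^ c * x := fun c x =>
      (((hQ x).zpow_left c).eq).symm
    have hL : (V₁ ^ n * V₂ ^ m) * (V₁ ^ s * V₂ ^ t)
        = Q ^ (-(s * m)) * (V₁ ^ n * V₁ ^ s * (V₂ ^ m * V₂ ^ t)) := by
      calc (V₁ ^ n * V₂ ^ m) * (V₁ ^ s * V₂ ^ t)
          = V₁ ^ n * ((V₂ ^ m * V₁ ^ s) * V₂ ^ t) := by group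
        _ = V₁ ^ n * ((Q ^ (-(s * m)) * (V₁ ^ s * V₂ ^ m)) * V₂ ^ t) := by rw [hms]
        _ = Q ^ (-(s * m)) * (V₁ ^ n * V₁ ^ s * (V₂ ^ m * V₂ ^ t)) := by
            rw [← mul_assoc, ← mul_assoc, hc]; group
    have hR : (V₁ ^ s * V₂ ^ t) * (V₁ ^ n * V₂ ^ m)
        = Q ^ (-(n * t)) * (V₁ ^ n * V₁ ^ s * (V₂ ^ m * V₂ ^ t)) := by
      calc (V₁ ^ s * V₂ ^ t) * (V₁ ^ n * V₂ ^ m)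
          = V₁ ^ s * ((V₂ ^ t * V₁ ^ n) * V₂ ^ m) := by group
        _ = V₁ ^ s * ((Q ^ (-(n * t)) * (V₁ ^ n * V₂ ^ t)) * V₂ ^ m) := by rw [hnt]
        _ = Q ^ (-(n * t)) * (V₁ ^ n * V₁ ^ s * (V₂ ^ m * V₂ ^ t)) := by
            rw [← mul_assoc, ← mul_assoc, hc]; group
    rw [hL, hR]
    conv_rhs => rw [← mul_assoc, ← zpow_add,
      show n * t - m * s + -(n * t) = -(s * m) by ring]
  calc (V₁ ^ n * V₂ ^ m).val * (V₁ ^ s * V₂ ^ t).val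
      = ((V₁ ^ n * V₂ ^ m) * (V₁ ^ s * V₂ ^ t)).val := rfl
    _ = (Q ^ (n * t - m * s) * ((V₁ ^ s * V₂ ^ t) * (V₁ ^ n * V₂ ^ m))).val := by rw [hunits]
    _ = q ^ (n * t - m * s) • ((V₁ ^ s * V₂ ^ t).val * (V₁ ^ n * V₂ ^ m).val) := by
        rw [Units.val_mul, hQzpow, ← Algebra.smul_def]; rfl
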